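/- With the notation above, suppose g(x) = 0 for some x lying in the face F_L of Δ_P. Then for each j = 1,...,k, either b_{ℓj} = 0 for all ℓ ∈ L, or the set {b_{ℓj} : ℓ ∈ L} contains both a strictly positive and a strictly negative element. In particular, if g vanishes at a point in the relative interior of a facet F_ℓ, then the ℓ-th row of B is zero. -/
import Mathlib


/-- The affine forms `p_i(y) = ⟨P_i, (1,y)⟩` cut out by the rows of the Gale dual `D`. -/
noncomputable def galeP (n k : ℕ) (D : Matrix (Fin n) (Fin (k + 1)) ℝ)
    (i : Fin n) (y : Fin k → ℝ) : ℝ :=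
  D.mulVec (Fin.cons 1 y) i

/-- The Gale polynomial map
`g_j(y) = ∏_{b_{ij}>0} p_i(y)^{b_{ij}} − ∏_{b_{ij}<0} p_i(y)^{−b_{ij}}`. -/
noncomputable def galeG (n k : ℕ) (B : Matrix (Fin n) (Fin k) ℝ)
    (D : Matrix (Fin n) (Fin (k + 1)) ℝ) (j : Fin k) (y : Fin k → ℝ) : ℝ :=
  (∏ i ∈ Finset.univ.filter (fun i => 0 < B i j), galeP n k D i y ^ B i j) -
    ∏ i ∈ Finset.univ.filter (fun i => B i j < 0), galeP n k D i y ^ (-(B i j))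

/-- Corollary: where `g` can vanish on the boundary: if `g(x) = 0`
for `x` in the face `F_L` of `Δ_P`, then for each `j`, either all entries `b_{ℓj}`,
`ℓ ∈ L`, vanish, or among them there is a strictly positive and a strictly negative
one.  In particular, if `L = {ℓ}` is a singleton (so `x` is in the relative
interior of the facet `F_ℓ`) then the `ℓ`-th row of `B` is zero. -/
theorem g_vanishing_on_face
    (n k : ℕ) (B : Matrix (Fin n) (Fin k) ℝ) (D : Matrix (Fin n) (Fin (k + 1)) ℝ)
    (L : Finset (Fin n)) (x : Fin k → ℝ)
    (hzero : ∀ l ∈ L, galeP n k D l x = 0)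
    (hpos : ∀ i, i ∉ L → 0 < galeP n k D i x)
    (hg : ∀ j, galeG n k B D j x = 0) :
    (∀ j, (∀ l ∈ L, B l j = 0) ∨ ((∃ l ∈ L, 0 < B l j) ∧ ∃ l ∈ L, B l j < 0)) ∧
    (∀ l : Fin n, L = {l} → ∀ j, B l j = 0) := by
  have key : ∀ j, (∃ l ∈ L, 0 < B l j) → ∃ l ∈ L, B l j < 0 := by
    rintro j ⟨l, hl, hb⟩
    have h1 : (∏ i ∈ Finset.univ.filter (fun i => 0 < B i j), galeP n k D i x ^ B i j) = 0 := by
      apply Finset.prod_eq_zero (Finset.mem_filter.mpr ⟨Finset.mem_univ l, hb⟩)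
      rw [hzero l hl, Real.zero_rpow hb.ne']
    have h2 : (∏ i ∈ Finset.univ.filter (fun i => B i j < 0), galeP n k D i x ^ (-(B i j))) = 0 := by
      have := hg j; unfold galeG at this; linarith
    rw [Finset.prod_eq_zero_iff] at h2
    obtain ⟨i, hi, hzi⟩ := h2
    refine ⟨i, ?_, (Finset.mem_filter.mp hi).2⟩
    by_contra hiL
    exact absurd hzi (ne_of_gt (Real.rpow_pos_of_pos (hpos i hiL) _))
  have key2 : ∀ j, (∃ l ∈ L, B l j < 0) → ∃ l ∈ L, 0 < B l j := by
    rintro j ⟨l, hl, hb⟩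
    have h2 : (∏ i ∈ Finset.univ.filter (fun i => B i j < 0), galeP n k D i x ^ (-(B i j))) = 0 := by
      apply Finset.prod_eq_zero (Finset.mem_filter.mpr ⟨Finset.mem_univ l, hb⟩)
      rw [hzero l hl, Real.zero_rpow (by linarith)]
    have h1 : (∏ i ∈ Finset.univ.filter (fun i => 0 < B i j), galeP n k D i x ^ B i j) = 0 := by
      have := hg j; unfold galeG at this; linarith
    rw [Finset.prod_eq_zero_iff] at h1
    obtain ⟨i, hi, hzi⟩ := h1
    refine ⟨i, ?_, (Finset.mem_filter.mp hi).2⟩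
    by_contra hiL
    exact absurd hzi (ne_of_gt (Real.rpow_pos_of_pos (hpos i hiL) _))
  constructor
  · intro j
    by_cases h : ∀ l ∈ L, B l j = 0
    · exact Or.inl h
    · right
      push_neg at h
      obtain ⟨l, hl, hne⟩ := h
      rcases hne.lt_or_gt with hneg | hp
      · exact ⟨key2 j ⟨l, hl, hneg⟩, ⟨l, hl, hneg⟩⟩
      · exact ⟨⟨l, hl, hp⟩, key j ⟨l, hl, hp⟩⟩
  · intro l hL j
    subst hL
    by_contra hne
    rcases (Ne.lt_or_gt hne) with hneg | hp
    · obtain ⟨l', hl', hb'⟩ := key2 j ⟨l, Finset.mem_singleton_self l, hneg⟩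
      rw [Finset.mem_singleton] at hl'
      subst hl'; linarith
    · obtain ⟨l', hl', hb'⟩ := key j ⟨l, Finset.mem_singleton_self l, hp⟩
      rw [Finset.mem_singleton] at hl'
      subst hl'; linarith
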